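/- Let φ be an entire function that is not a constant multiple of an exponential function (i.e., not of the form c·e^{az}). Then for any w₀ ∈ ℂ with φ(w₀) ≠ 0 and any δ > 0, there exist w₁, w₂ ∈ B(w₀, δ) with w₁ ≠ w₂ such that the map t ↦ log|φ(t·w₁ + (1−t)·w₂)| is strictly convex on [0,1]. -/

import Mathlib

open Complex Metric

private lemma entire_deriv {φ : ℂ → ℂ} (hφ : Differentiable ℂ φ) :
    Differentiable ℂ (deriv φ) :=
  analyticOnNhd_univ_iff_differentiable.mp
    ((analyticOnNhd_univ_iff_differentiable.mpr hφ).deriv)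

private lemma hasDerivAt_logratio {φ : ℂ → ℂ} (hφ : Differentiable ℂ φ) {c z : ℂ}
    (hc : c ≠ 0) (hz : φ z / c ∈ slitPlane) :
    HasDerivAt (fun w => Complex.log (φ w / c)) (deriv φ z / φ z) z := by
  have hz0 : φ z ≠ 0 := by
    intro h
    rw [h, zero_div] at hz
    exact slitPlane_ne_zero hz rfl
  have h1 : HasDerivAt (fun w => φ w / c) (deriv φ z / c) z :=
    (hφ z).hasDerivAt.div_const c
  have h2 := (Complex.hasDerivAt_log hz).comp z h1
  refine h2.congr_deriv ?_
  field_simp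

private lemma hasDerivAt_q {φ : ℂ → ℂ} (hφ : Differentiable ℂ φ) {z : ℂ} (hz : φ z ≠ 0) :
    HasDerivAt (fun w => deriv φ w / φ w)
      ((deriv (deriv φ) z * φ z - deriv φ z ^ 2) / φ z ^ 2) z := by
  have h := ((entire_deriv hφ z).hasDerivAt.div (hφ z).hasDerivAt hz)
  refine h.congr_deriv ?_
  ring

private lemma hasDerivAt_line (w₁ w₂ : ℂ) (t : ℝ) :
    HasDerivAt (fun s : ℂ => s * w₁ + (1 - s) * w₂) (w₁ - w₂) (t : ℂ) := by
  have h1 : HasDerivAt (fun s : ℂ => s * w₁) w₁ (t : ℂ) := by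
    simpa using (hasDerivAt_id (t : ℂ)).mul_const w₁
  have h2 : HasDerivAt (fun s : ℂ => (1 - s) * w₂) (-w₂) (t : ℂ) := by
    simpa using ((hasDerivAt_id (t : ℂ)).const_sub 1).mul_const w₂
  exact (h1.add h2).congr_deriv (by ring)

theorem convexity_lemma (φ : ℂ → ℂ) (hφ : Differentiable ℂ φ)
    (hexp : ¬ ∃ c a : ℂ, ∀ z : ℂ, φ z = c * Complex.exp (a * z))
    (w₀ : ℂ) (hw₀ : φ w₀ ≠ 0) (δ : ℝ) (hδ : 0 < δ) :
    ∃ w₁ ∈ ball w₀ δ, ∃ w₂ ∈ ball w₀ δ, w₁ ≠ w₂ ∧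
      StrictConvexOn ℝ (Set.Icc (0:ℝ) 1)
        (fun t : ℝ => Real.log ‖φ ((t : ℂ) * w₁ + (1 - (t : ℂ)) * w₂)‖) := by
  have hφ' : Differentiable ℂ (deriv φ) := entire_deriv hφ
  have hφ'' : Differentiable ℂ (deriv (deriv φ)) := entire_deriv hφ'
  set ψ : ℂ → ℂ := fun z => deriv (deriv φ) z * φ z - deriv φ z ^ 2 with hψdef
  have hψdiff : Differentiable ℂ ψ := (hφ''.mul hφ).sub (hφ'.pow 2)
  -- Step 1 : ψ is not identically zero
  have hψ : ¬ ∀ z, ψ z = 0 := by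
    intro hzero
    apply hexp
    set a : ℂ := deriv φ w₀ / φ w₀ with hadef
    obtain ⟨r, hr0, hrball⟩ : ∃ r > 0, ∀ z, dist z w₀ < r → φ z ≠ 0 := by
      have h := (hφ.continuous.continuousAt (x := w₀)).eventually_ne hw₀
      exact Metric.eventually_nhds_iff.mp h
    -- the logarithmic derivative is constant on the ball
    have hq : ∀ z ∈ ball w₀ r, deriv φ z / φ z = a := by
      intro z hz
      exact (convex_ball w₀ r).is_const_of_fderivWithin_eq_zero
        (𝕜 := ℂ) (f := fun w => deriv φ w / φ w)
        (fun x hx =>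
          (hasDerivAt_q hφ (hrball x (mem_ball.mp hx))).differentiableAt.differentiableWithinAt)
        (fun x hx => by
          rw [fderivWithin_of_isOpen isOpen_ball hx]
          have h := hasDerivAt_q hφ (hrball x (mem_ball.mp hx))
          have hz0 : deriv (deriv φ) x * φ x - deriv φ x ^ 2 = 0 := hzero x
          rw [hz0, zero_div] at h
          rw [h.hasFDerivAt.fderiv]
          ext1
          simp)
        hz (mem_ball_self hr0)
    have hev : (fun z => deriv φ z - a * φ z) =ᶠ[nhds w₀] 0 := by
      filter_upwards [ball_mem_nhds w₀ hr0] with z hz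
      have h1 := hq z hz
      have h2 : φ z ≠ 0 := hrball z (mem_ball.mp hz)
      have := (div_eq_iff h2).mp h1
      simp [this]
    have hall : ∀ z, deriv φ z = a * φ z := by
      have hg : AnalyticOnNhd ℂ (fun z => deriv φ z - a * φ z) Set.univ :=
        analyticOnNhd_univ_iff_differentiable.mpr (hφ'.sub (hφ.const_mul a))
      have h := hg.eqOn_zero_of_preconnected_of_eventuallyEq_zero
        isPreconnected_univ (Set.mem_univ w₀) hev
      intro z
      have := h (Set.mem_univ z)
      simpa [sub_eq_zero] using this
    refine ⟨φ 0, a, fun z => ?_⟩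
    have hE : ∀ x : ℂ, HasDerivAt (fun z => φ z * Complex.exp (-(a * z))) 0 x := by
      intro x
      have h1 : HasDerivAt (fun z : ℂ => -(a * z)) (-a) x := by
        exact ((hasDerivAt_id x).const_mul a).neg.congr_deriv (by ring)
      have h2 := h1.cexp
      have h3 := (hφ x).hasDerivAt.mul h2
      refine h3.congr_deriv ?_
      rw [hall x]
      ring
    have hEdiff : Differentiable ℂ (fun z => φ z * Complex.exp (-(a * z))) :=
      fun x => (hE x).differentiableAt
    have hconst := is_const_of_deriv_eq_zero hEdiff (fun x => (hE x).deriv) z 0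
    simp only [mul_zero, neg_zero, Complex.exp_zero, mul_one] at hconst
    have hexpne := Complex.exp_ne_zero (-(a * z))
    field_simp [Complex.exp_neg] at hconst
    rw [← hconst, mul_assoc, ← Complex.exp_add]
    simp
  -- Step 2 : find a point u near w₀ with φ u ≠ 0 and ψ u ≠ 0
  have hχ : AnalyticAt ℂ (fun z => ψ z * φ z) w₀ := ((hψdiff.mul hφ).analyticAt w₀)
  obtain ⟨u, huχ, humem⟩ : ∃ u, (ψ u * φ u ≠ 0) ∧ u ∈ ball w₀ δ := by
    rcases hχ.eventually_eq_zero_or_eventually_ne_zero with hcase | hcase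
    · exfalso
      apply hψ
      have hψev : ψ =ᶠ[nhds w₀] 0 := by
        have hφne : ∀ᶠ z in nhds w₀, φ z ≠ 0 :=
          (hφ.continuous.continuousAt (x := w₀)).eventually_ne hw₀
        filter_upwards [hcase, hφne] with z h1 h2
        simpa using (mul_eq_zero.mp h1).resolve_right h2
      have h := (analyticOnNhd_univ_iff_differentiable.mpr
        hψdiff).eqOn_zero_of_preconnected_of_eventuallyEq_zero
        isPreconnected_univ (Set.mem_univ w₀) hψev
      intro z
      simpa using h (Set.mem_univ z)
    · have hball : ∀ᶠ z in nhdsWithin w₀ {w₀}ᶜ, z ∈ ball w₀ δ :=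
        Filter.Eventually.filter_mono nhdsWithin_le_nhds
          (isOpen_ball.eventually_mem (mem_ball_self hδ))
      obtain ⟨u, hu1, hu2⟩ := (hcase.and hball).exists
      exact ⟨u, hu1, hu2⟩
  have hφu : φ u ≠ 0 := fun h => huχ (by simp [h])
  have hψu : ψ u ≠ 0 := fun h => huχ (by simp [h])
  set c : ℂ := φ u with hcdef
  set κ : ℂ := ψ u / φ u ^ 2 with hκdef
  have hκ : κ ≠ 0 := div_ne_zero hψu (pow_ne_zero 2 hφu)
  -- choose a direction d with d ^ 2 = conj κ
  obtain ⟨d, hd⟩ := Complex.isAlgClosed.exists_pow_nat_eq ((starRingEnd ℂ) κ) (zero_lt_two)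
  have hdne : d ≠ 0 := by
    intro h
    rw [h] at hd
    simp only [ne_eq, zero_pow, OfNat.ofNat_ne_zero, not_false_eq_true] at hd
    exact hκ (by simpa using congrArg (starRingEnd ℂ) hd.symm)
  set P : ℂ → ℝ := fun z => (d ^ 2 * (ψ z / φ z ^ 2)).re with hPdef
  have hPu : 0 < P u := by
    have : d ^ 2 * κ = (starRingEnd ℂ) κ * κ := by rw [hd]
    simp only [hPdef]
    rw [← hκdef, this, mul_comm, Complex.mul_conj]
    simpa using Complex.normSq_pos.mpr hκ
  have hPcont : ContinuousAt P u := by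
    apply Complex.continuous_re.continuousAt.comp
    apply ContinuousAt.mul continuousAt_const
    exact (hψdiff.continuous.continuousAt).div
      ((hφ.continuous.pow 2).continuousAt) (pow_ne_zero 2 hφu)
  -- find a radius r around u where everything is nice
  obtain ⟨r, hr0, hr⟩ : ∃ r > 0, ∀ z, dist z u < r →
      0 < P z ∧ φ z / c ∈ slitPlane ∧ z ∈ ball w₀ δ := by
    have h1 : ∀ᶠ z in nhds u, 0 < P z := hPcont.eventually (eventually_gt_nhds hPu)
    have h2 : ∀ᶠ z in nhds u, φ z / c ∈ slitPlane := by
      have hcont : ContinuousAt (fun z => φ z / c) u :=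
        (hφ.continuous.continuousAt).div continuousAt_const hφu
      have hval : φ u / c ∈ slitPlane := by
        rw [hcdef, div_self hφu]; exact one_mem_slitPlane
      exact hcont.eventually_mem (isOpen_slitPlane.mem_nhds hval)
    have h3 : ∀ᶠ z in nhds u, z ∈ ball w₀ δ := isOpen_ball.eventually_mem humem
    exact Metric.eventually_nhds_iff.mp ((h1.and (h2.and h3)).mono (fun z hz => hz))
  set ε : ℝ := r / (2 * (‖d‖ + 1)) with hεdef
  have habsd : 0 < ‖d‖ + 1 := by positivity
  have hε : 0 < ε := by positivity
  set w₁ : ℂ := u + (ε : ℂ) * d with hw₁def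
  set w₂ : ℂ := u with hw₂def
  have hεd : ε * ‖d‖ < r / 2 := by
    rw [hεdef]
    rw [div_mul_eq_mul_div, div_lt_div_iff₀ (by positivity) (by norm_num : (0:ℝ) < 2)]
    have : ‖d‖ < ‖d‖ + 1 := by linarith
    nlinarith [hr0, norm_nonneg d]
  set Z : ℝ → ℂ := fun t => (t : ℂ) * w₁ + (1 - (t : ℂ)) * w₂ with hZdef
  have hZeq : ∀ t : ℝ, Z t = u + (t : ℂ) * ((ε : ℂ) * d) := by
    intro t; rw [hZdef]; simp only [hw₁def, hw₂def]; ring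
  have hZmem : ∀ t ∈ Set.Ioo (-2 : ℝ) 2, dist (Z t) u < r := by
    intro t ht
    rw [hZeq t, dist_eq_norm]
    simp only [add_sub_cancel_left]
    rw [norm_mul, norm_mul]
    simp only [Complex.norm_real, Real.norm_eq_abs]
    have h1 : |t| < 2 := abs_lt.mpr ⟨ht.1, ht.2⟩
    have h2 : |ε| = ε := abs_of_pos hε
    calc |t| * (|ε| * ‖d‖) ≤ 2 * (|ε| * ‖d‖) := by
          apply mul_le_mul_of_nonneg_right h1.le; positivity
      _ = 2 * (ε * ‖d‖) := by rw [h2]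
      _ < 2 * (r / 2) := by linarith [hεd]
      _ = r := by ring
  have hsub : Set.Icc (0 : ℝ) 1 ⊆ Set.Ioo (-2 : ℝ) 2 := by
    intro t ht
    exact ⟨by linarith [ht.1], by linarith [ht.2]⟩
  have hprops : ∀ t ∈ Set.Ioo (-2 : ℝ) 2,
      0 < P (Z t) ∧ φ (Z t) / c ∈ slitPlane ∧ Z t ∈ ball w₀ δ :=
    fun t ht => hr (Z t) (hZmem t ht)
  have hφZ : ∀ t ∈ Set.Ioo (-2 : ℝ) 2, φ (Z t) ≠ 0 := by
    intro t ht h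
    have := (hprops t ht).2.1
    rw [h, zero_div] at this
    exact slitPlane_ne_zero this rfl
  have hcne : c ≠ 0 := hφu
  -- set up the functions and their derivatives
  set F : ℝ → ℝ := fun t => (Complex.log (φ (Z t) / c)).re with hFdef
  set F₁ : ℝ → ℝ := fun t => ((w₁ - w₂) * (deriv φ (Z t) / φ (Z t))).re with hF₁def
  set F₂ : ℝ → ℝ := fun t =>
    ((w₁ - w₂) ^ 2 * (ψ (Z t) / φ (Z t) ^ 2)).re with hF₂def
  have hF1 : ∀ t ∈ Set.Ioo (-2 : ℝ) 2, HasDerivAt F (F₁ t) t := by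
    intro t ht
    have hLd := hasDerivAt_logratio hφ hcne (hprops t ht).2.1
    have hcomp := (hLd.comp (t : ℂ) (hasDerivAt_line w₁ w₂ t)).comp_ofReal
    have hre := Complex.reCLM.hasFDerivAt.comp_hasDerivAt t hcomp
    refine hre.congr_deriv ?_
    simp [hF₁def, mul_comm]
  have hF2 : ∀ t ∈ Set.Ioo (-2 : ℝ) 2, HasDerivAt F₁ (F₂ t) t := by
    intro t ht
    have hqd := (hasDerivAt_q hφ (hφZ t ht)).const_mul (w₁ - w₂)
    have hcomp := (hqd.comp (t : ℂ) (hasDerivAt_line w₁ w₂ t)).comp_ofReal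
    have hre := Complex.reCLM.hasFDerivAt.comp_hasDerivAt t hcomp
    refine hre.congr_deriv ?_
    simp only [hF₂def, Complex.reCLM_apply]
    congr 1
    ring
  -- strict convexity of F
  have hconv : StrictConvexOn ℝ (Set.Icc (0:ℝ) 1) F := by
    apply strictConvexOn_of_deriv2_pos (convex_Icc 0 1)
    · intro t ht
      exact ((hF1 t (hsub ht)).differentiableAt.continuousAt).continuousWithinAt
    · intro x hx
      rw [interior_Icc] at hx
      have hx' : x ∈ Set.Ioo (-2 : ℝ) 2 := ⟨by linarith [hx.1], by linarith [hx.2]⟩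
      have hd1 : deriv F =ᶠ[nhds x] F₁ := by
        filter_upwards [isOpen_Ioo.mem_nhds hx'] with y hy using (hF1 y hy).deriv
      have h2 : deriv (deriv F) x = F₂ x := by
        rw [hd1.deriv_eq]
        exact (hF2 x hx').deriv
      have hit : (deriv^[2] F) x = deriv (deriv F) x := by
        simp [Function.iterate_succ, Function.iterate_one]
      rw [hit, h2]
      -- positivity of F₂ x
      have hP := (hprops x hx').1
      have hw12 : w₁ - w₂ = (ε : ℂ) * d := by rw [hw₁def, hw₂def]; ring
      have : F₂ x = ε ^ 2 * P (Z x) := by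
        simp only [hF₂def, hPdef, hw12]
        rw [mul_pow, ← Complex.ofReal_pow, mul_assoc, Complex.re_ofReal_mul]
      rw [this]
      positivity
  -- translate back to the original function
  have heq : ∀ t ∈ Set.Icc (0:ℝ) 1,
      Real.log ‖φ (Z t)‖ = F t + Real.log ‖c‖ := by
    intro t ht
    have hz := hφZ t (hsub ht)
    have habs : ‖φ (Z t)‖ ≠ 0 := by
      simpa using hz
    have habsc : ‖c‖ ≠ 0 := by simpa using hcne
    rw [hFdef]
    simp only [Complex.log_re, norm_div]
    rw [Real.log_div habs habsc]
    ring
  refine ⟨w₁, ?_, w₂, ?_, ?_, ?_⟩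
  · have := (hr w₁ ?_).2.2
    · exact this
    · rw [hw₁def, dist_eq_norm]
      simp only [add_sub_cancel_left, norm_mul, Complex.norm_real, Real.norm_eq_abs,
        abs_of_pos hε]
      linarith [hεd, hr0]
  · exact humem
  · rw [hw₁def, hw₂def]
    intro h
    have : (ε : ℂ) * d = 0 := by
      have := congrArg (· - u) h
      simpa using this
    rcases mul_eq_zero.mp this with h' | h'
    · exact absurd (by exact_mod_cast h') (ne_of_gt hε)
    · exact hdne h'
  · constructor
    · exact convex_Icc 0 1
    · intro x hx y hy hxy a b ha hb hab
      have hxymem : a • x + b • y ∈ Set.Icc (0:ℝ) 1 :=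
        (convex_Icc 0 1) hx hy ha.le hb.le hab
      have hkey := hconv.2 hx hy hxy ha hb hab
      simp only [smul_eq_mul] at hkey hxymem ⊢
      have e1 := heq x hx
      have e2 := heq y hy
      have e3 := heq _ hxymem
      simp only [hZdef] at e1 e2 e3 hkey ⊢
      rw [e1, e2, e3]
      have hL : a * Real.log ‖c‖ + b * Real.log ‖c‖
          = Real.log ‖c‖ := by rw [← add_mul, hab, one_mul]
      linarith
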